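/- Let N ≥ 1. For any series–parallel circuit C over probability vectors on N states — a finite binary tree whose leaves are labelled by probability vectors and whose internal nodes are labelled 'series' or 'parallel', evaluated recursively by val(leaf p) = p, val(series node) = (val of left subtree) ∗ (val of right subtree), and val(parallel node) = (val of left subtree) ⊕ (val of right subtree) — let the dual circuit C̄ be obtained from C by replacing every leaf label p with its reversal rev p (where (rev p) i = p (N−1−i)) and exchanging the labels 'series' and 'parallel' at every internal node. Then val(C̄) = rev (val C), i.e. val(C̄) i = val(C) (N−1−i) for every state i. -/
import Mathlib


noncomputable section

/-- Series composition: distribution of `min` of two independent states. -/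
def smin {N : ℕ} (p q : Fin N → ℝ) : Fin N → ℝ :=
  fun k => ∑ i, ∑ j, if min i j = k then p i * q j else 0

/-- Parallel composition: distribution of `max` of two independent states. -/
def smax {N : ℕ} (p q : Fin N → ℝ) : Fin N → ℝ :=
  fun k => ∑ i, ∑ j, if max i j = k then p i * q j else 0

/-- A probability vector on `N` states. -/
def IsProbVec {N : ℕ} (p : Fin N → ℝ) : Prop :=
  (∀ i, 0 ≤ p i) ∧ ∑ i, p i = 1

/-- Reversal of a vector: `(rev p) i = p (N-1-i)`. -/
def rev {N : ℕ} (p : Fin N → ℝ) : Fin N → ℝ := fun i => p i.rev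

/-- A series-parallel circuit: a finite binary tree with leaves labelled by
vectors and internal nodes labelled `series` or `parallel`. -/
inductive Circuit (N : ℕ) where
  | leaf (p : Fin N → ℝ)
  | series (l r : Circuit N)
  | parallel (l r : Circuit N)

/-- The value (realized distribution) of a circuit. -/
def Circuit.val {N : ℕ} : Circuit N → (Fin N → ℝ)
  | .leaf p => p
  | .series l r => smin l.val r.val
  | .parallel l r => smax l.val r.val

/-- The dual circuit: reverse every leaf label and exchange series/parallel. -/
def Circuit.dual {N : ℕ} : Circuit N → Circuit N
  | .leaf p => .leaf (rev p)
  | .series l r => .parallel l.dual r.dual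
  | .parallel l r => .series l.dual r.dual

/-- All leaves of the circuit are labelled by probability vectors. -/
def Circuit.probLeaves {N : ℕ} : Circuit N → Prop
  | .leaf p => IsProbVec p
  | .series l r => l.probLeaves ∧ r.probLeaves
  | .parallel l r => l.probLeaves ∧ r.probLeaves

lemma rev_max {N : ℕ} (i j : Fin N) : (max i j).rev = min i.rev j.rev := by
  rcases le_total i j with h | h
  · rw [max_eq_right h, min_eq_right (Fin.rev_le_rev.mpr h)]
  · rw [max_eq_left h, min_eq_left (Fin.rev_le_rev.mpr h)]

lemma rev_min {N : ℕ} (i j : Fin N) : (min i j).rev = max i.rev j.rev := by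
  rcases le_total i j with h | h
  · rw [min_eq_left h, max_eq_left (Fin.rev_le_rev.mpr h)]
  · rw [min_eq_right h, max_eq_right (Fin.rev_le_rev.mpr h)]

lemma sum_rev {N : ℕ} (f : Fin N → ℝ) : ∑ i, f i = ∑ i : Fin N, f i.rev :=
  (Fintype.sum_equiv Fin.revPerm _ _ fun _ => rfl).symm

lemma smax_rev {N : ℕ} (p q : Fin N → ℝ) :
    smax (rev p) (rev q) = rev (smin p q) := by
  funext k
  show _ = smin p q k.rev
  unfold smax smin rev
  rw [sum_rev fun i : Fin N => ∑ j, if min i j = k.rev then p i * q j else 0]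
  refine Finset.sum_congr rfl fun i _ => ?_
  rw [sum_rev fun j : Fin N => if min i.rev j = k.rev then p i.rev * q j else 0]
  refine Finset.sum_congr rfl fun j _ => ?_
  congr 1
  rw [← rev_max i j]
  exact propext Fin.rev_inj.symm

lemma smin_rev {N : ℕ} (p q : Fin N → ℝ) :
    smin (rev p) (rev q) = rev (smax p q) := by
  funext k
  show _ = smax p q k.rev
  unfold smax smin rev
  rw [sum_rev fun i : Fin N => ∑ j, if max i j = k.rev then p i * q j else 0]
  refine Finset.sum_congr rfl fun i _ => ?_
  rw [sum_rev fun j : Fin N => if max i.rev j = k.rev then p i.rev * q j else 0]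
  refine Finset.sum_congr rfl fun j _ => ?_
  congr 1
  rw [← rev_min i j]
  exact propext Fin.rev_inj.symm

/-- Duality Theorem: the dual circuit realizes the reversed distribution. -/
theorem duality (N : ℕ) (hN : 1 ≤ N) (C : Circuit N) (hC : C.probLeaves) :
    C.dual.val = rev C.val ∧ ∀ i : Fin N, C.dual.val i = C.val i.rev := by
  have key : ∀ C : Circuit N, C.dual.val = rev C.val := by
    intro C
    induction C with
    | leaf p => rfl
    | series l r hl hr => simp [Circuit.dual, Circuit.val, hl, hr, smax_rev]
    | parallel l r hl hr => simp [Circuit.dual, Circuit.val, hl, hr, smin_rev]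
  exact ⟨key C, fun i => by rw [key C]; rfl⟩
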